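/- arXiv:1307.4173 — 5 statements merged into one kernel-verified Lean document; each statement's English description precedes it below -/
import Mathlib

section
/- Let E be a real Banach space, T > 0 and M > 0. Let J : [0, T] → E be continuous and let K : {(t, s) : 0 ≤ s ≤ t ≤ T} → (E →L E) be a continuous map into the bounded linear operators on E with ‖K(t, s)‖ ≤ M for all 0 ≤ s ≤ t ≤ T. Then there exists a unique continuous function U : [0, T] → E satisfying the Volterra integral equation U(t) = J(t) + ∫₀ᵗ K(t, s)(U(s)) ds for all t ∈ [0, T]. -/
open Set MeasureTheory

/-- Lemma 4.1 (abstract form): existence and uniqueness of a continuous solution to the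
linear Volterra integral equation `U(t) = J(t) + ∫₀ᵗ K(t,s)(U(s)) ds` on `[0, T]` in a real
Banach space, for a continuous, uniformly bounded operator-valued kernel `K`. -/
theorem stmt_2 {E : Type*} [NormedAddCommGroup E] [NormedSpace ℝ E] [CompleteSpace E]
    (T M : ℝ) (hT : 0 < T) (hM : 0 < M)
    (J : ℝ → E) (hJ : ContinuousOn J (Icc 0 T))
    (K : ℝ → ℝ → E →L[ℝ] E)
    (hKcont : ContinuousOn (fun p : ℝ × ℝ => K p.1 p.2)
      {p : ℝ × ℝ | 0 ≤ p.2 ∧ p.2 ≤ p.1 ∧ p.1 ≤ T})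
    (hKbd : ∀ s t : ℝ, 0 ≤ s → s ≤ t → t ≤ T → ‖K t s‖ ≤ M) :
    ∃ U : ℝ → E,
      (ContinuousOn U (Icc 0 T) ∧
        ∀ t ∈ Icc (0:ℝ) T, U t = J t + ∫ s in (0:ℝ)..t, K t s (U s)) ∧
      ∀ V : ℝ → E,
        (ContinuousOn V (Icc 0 T) ∧
          ∀ t ∈ Icc (0:ℝ) T, V t = J t + ∫ s in (0:ℝ)..t, K t s (V s)) →
        EqOn U V (Icc 0 T) := by
  classical
  have hT0 : (0:ℝ) ≤ T := hT.le
  set π : ℝ → Icc (0:ℝ) T := projIcc 0 T hT0 with hπdef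
  -- retract onto the triangle and extend the kernel
  set τ : ℝ → ℝ := fun t => min (max t 0) T with hτdef
  set Kt : ℝ → ℝ → E →L[ℝ] E := fun t s => K (τ t) (min (τ t) (max s 0)) with hKtdef
  have hτcont : Continuous τ := by fun_prop
  have hτmem : ∀ t, 0 ≤ τ t ∧ τ t ≤ T := fun t =>
    ⟨le_min (le_max_right _ _) hT0, min_le_right _ _⟩
  have htri : ∀ t s : ℝ,
      ((τ t, min (τ t) (max s 0)) : ℝ × ℝ) ∈
        {p : ℝ × ℝ | 0 ≤ p.2 ∧ p.2 ≤ p.1 ∧ p.1 ≤ T} := by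
    intro t s
    exact ⟨le_min (hτmem t).1 (le_max_right _ _), min_le_left _ _, (hτmem t).2⟩
  have hKt_cont : Continuous fun p : ℝ × ℝ => Kt p.1 p.2 := by
    have : Continuous fun p : ℝ × ℝ => ((τ p.1, min (τ p.1) (max p.2 0)) : ℝ × ℝ) := by
      fun_prop
    exact hKcont.comp_continuous this fun p => htri p.1 p.2
  have hKt_bd : ∀ t s : ℝ, ‖Kt t s‖ ≤ M := by
    intro t s
    exact hKbd _ _ (htri t s).1 (htri t s).2.1 (htri t s).2.2
  have hKt_eq : ∀ t s : ℝ, 0 ≤ s → s ≤ t → t ≤ T → Kt t s = K t s := by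
    intro t s hs hst htT
    have h1 : τ t = t := by
      simp only [hτdef]
      rw [max_eq_left (hs.trans hst), min_eq_left htT]
    simp only [hKtdef, h1, max_eq_left hs, min_eq_right hst]
  -- extended data
  set Jext : ℝ → E := fun t => J (π t) with hJextdef
  have hJext_cont : Continuous Jext :=
    hJ.comp_continuous (continuous_subtype_val.comp continuous_projIcc) fun t => (π t).2
  have hJext_eq : ∀ t ∈ Icc (0:ℝ) T, Jext t = J t := by
    intro t ht
    simp [hJextdef, hπdef, projIcc_of_mem hT0 ht]
  -- the Picard operator on C(Icc 0 T, E)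
  set Φf : C(Icc (0:ℝ) T, E) → ℝ → E :=
    fun u t => Jext t + ∫ s in (0:ℝ)..t, Kt t s (u (π s)) with hΦfdef
  have hΦf_cont : ∀ u, Continuous (Φf u) := by
    intro u
    apply hJext_cont.add
    apply intervalIntegral.continuous_parametric_intervalIntegral_of_continuous
      (f := fun t s => Kt t s (u (π s))) _ continuous_id
    exact hKt_cont.clm_apply
      (u.continuous.comp (continuous_projIcc.comp continuous_snd))
  set Φ : C(Icc (0:ℝ) T, E) → C(Icc (0:ℝ) T, E) :=
    fun u => ⟨fun t => Φf u t, (hΦf_cont u).comp continuous_subtype_val⟩ with hΦdef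
  have hint : ∀ (u : C(Icc (0:ℝ) T, E)) (t : ℝ),
      IntervalIntegrable (fun s => Kt t s (u (π s))) volume 0 t := by
    intro u t
    apply Continuous.intervalIntegrable
    exact (hKt_cont.comp (continuous_const.prodMk continuous_id)).clm_apply
      (u.continuous.comp continuous_projIcc)
  -- the key iterated estimate
  have key : ∀ (n : ℕ) (u v : C(Icc (0:ℝ) T, E)) (t : Icc (0:ℝ) T),
      ‖(Φ^[n] u) t - (Φ^[n] v) t‖ ≤ M ^ n * (t:ℝ) ^ n / n.factorial * dist u v := by
    intro n
    induction n with
    | zero =>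
      intro u v t
      simpa [dist_eq_norm] using ContinuousMap.dist_apply_le_dist (f := u) (g := v) t
    | succ n ih =>
      intro u v t
      rw [Function.iterate_succ_apply', Function.iterate_succ_apply']
      set a := Φ^[n] u with ha
      set b := Φ^[n] v with hb
      obtain ⟨t, ht⟩ := t
      have ht0 : (0:ℝ) ≤ t := ht.1
      have htT : t ≤ T := ht.2
      have hsub : (Φ a) ⟨t, ht⟩ - (Φ b) ⟨t, ht⟩
          = ∫ s in (0:ℝ)..t, (Kt t s (a (π s)) - Kt t s (b (π s))) := by
        simp only [hΦdef, ContinuousMap.coe_mk, hΦfdef]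
        rw [intervalIntegral.integral_sub (hint a t) (hint b t)]
        abel
      rw [hsub]
      set d := dist u v with hd
      have hd0 : 0 ≤ d := dist_nonneg
      set C : ℝ := M ^ (n + 1) * d / n.factorial with hC
      have hbound : ∀ s ∈ uIoc (0:ℝ) t,
          ‖Kt t s (a (π s)) - Kt t s (b (π s))‖ ≤ C * s ^ n := by
        intro s hs
        rw [uIoc_of_le ht0] at hs
        have hs0 : 0 ≤ s := hs.1.le
        have hst : s ≤ t := hs.2
        have hsmem : s ∈ Icc (0:ℝ) T := ⟨hs0, hst.trans htT⟩
        have hπs : π s = ⟨s, hsmem⟩ := projIcc_of_mem hT0 hsmem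
        have h1 : Kt t s (a (π s)) - Kt t s (b (π s)) = Kt t s (a (π s) - b (π s)) := by
          rw [map_sub]
        rw [h1]
        calc ‖Kt t s (a (π s) - b (π s))‖
            ≤ ‖Kt t s‖ * ‖a (π s) - b (π s)‖ := (Kt t s).le_opNorm _
          _ ≤ M * (M ^ n * s ^ n / n.factorial * d) := by
              apply mul_le_mul (hKt_bd t s) _ (norm_nonneg _) hM.le
              have := ih u v ⟨s, hsmem⟩
              rw [← ha, ← hb] at this
              simpa [hπs] using this
          _ = C * s ^ n := by rw [hC]; ring
      have hCint : IntervalIntegrable (fun s : ℝ => C * s ^ n) volume 0 t := by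
        apply Continuous.intervalIntegrable; fun_prop
      have := (intervalIntegral.norm_integral_le_of_norm_le
        (f := fun s => Kt t s (a (π s)) - Kt t s (b (π s)))
        (g := fun s => C * s ^ n) (μ := volume) ht0
        (by
          exact Filter.Eventually.of_forall fun s hs => hbound s (by rw [uIoc_of_le ht0]; exact hs)) hCint).trans (le_abs_self _)
      refine this.trans ?_
      have hval : (∫ s in (0:ℝ)..t, C * s ^ n) = C * (t ^ (n + 1) / (n + 1)) := by
        rw [intervalIntegral.integral_const_mul, integral_pow]
        ring
      rw [hval, abs_of_nonneg (by positivity)]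
      rw [hC]
      have hfact : ((n + 1).factorial : ℝ) = (n + 1) * n.factorial := by
        push_cast [Nat.factorial_succ]; ring
      rw [hfact]
      have hn0 : (0:ℝ) < n.factorial := by positivity
      field_simp
      ring_nf
      exact le_refl _
  -- Lipschitz estimate for the iterates
  have lip : ∀ n : ℕ, LipschitzWith (Real.toNNReal ((M * T) ^ n / n.factorial)) Φ^[n] := by
    intro n
    apply LipschitzWith.of_dist_le_mul
    intro u v
    have hcoe : ((Real.toNNReal ((M * T) ^ n / n.factorial) : NNReal) : ℝ)
        = (M * T) ^ n / n.factorial :=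
      Real.coe_toNNReal ((M * T) ^ n / n.factorial) (by positivity)
    have hCnn : (0:ℝ) ≤ (M * T) ^ n / n.factorial * dist u v :=
      mul_nonneg (by positivity) dist_nonneg
    rw [hcoe, ContinuousMap.dist_le hCnn]
    intro t
    rw [dist_eq_norm]
    refine (key n u v t).trans ?_
    have ht : (t:ℝ) ∈ Icc (0:ℝ) T := t.2
    have : M ^ n * (t:ℝ) ^ n ≤ (M * T) ^ n := by
      rw [mul_pow]
      gcongr
      exacts [ht.1, ht.2]
    have hn0 : (0:ℝ) < n.factorial := by positivity
    rw [div_mul_eq_mul_div, div_mul_eq_mul_div, div_le_div_iff_of_pos_right hn0]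
    exact mul_le_mul_of_nonneg_right this dist_nonneg
  -- choose a contracting iterate
  obtain ⟨n, hn⟩ : ∃ n : ℕ, (M * T) ^ n / n.factorial < 1 :=
    ((FloorSemiring.tendsto_pow_div_factorial_atTop (M * T)).eventually
      (gt_mem_nhds one_pos)).exists
  have hc1 : Real.toNNReal ((M * T) ^ n / n.factorial) < 1 := by
    rw [← Real.toNNReal_one]
    exact (Real.toNNReal_lt_toNNReal_iff one_pos).mpr hn
  have hC : ContractingWith (Real.toNNReal ((M * T) ^ n / n.factorial)) Φ^[n] :=
    ⟨hc1, lip n⟩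
  have : Nonempty (C(Icc (0:ℝ) T, E)) := ⟨ContinuousMap.const _ 0⟩
  set x : C(Icc (0:ℝ) T, E) := hC.fixedPoint Φ^[n] with hx
  have hfix : Function.IsFixedPt Φ x := hC.isFixedPt_fixedPoint_iterate
  -- the solution
  refine ⟨fun t => x (π t), ⟨?_, ?_⟩, ?_⟩
  · exact (x.continuous.comp continuous_projIcc).continuousOn
  · intro t ht
    have hπt : π t = ⟨t, ht⟩ := projIcc_of_mem hT0 ht
    show x (π t) = J t + ∫ s in (0:ℝ)..t, K t s (x (π s))
    have h1 : x (π t) = (Φ x) ⟨t, ht⟩ := by rw [hπt, hfix]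
    rw [h1]
    simp only [hΦdef, ContinuousMap.coe_mk, hΦfdef]
    rw [hJext_eq t ht]
    congr 1
    apply intervalIntegral.integral_congr
    intro s hs
    rw [uIcc_of_le ht.1] at hs
    show Kt t s (x (π s)) = K t s (x (π s))
    rw [hKt_eq t s hs.1 hs.2 ht.2]
  · rintro V ⟨hVc, hVeq⟩
    set v : C(Icc (0:ℝ) T, E) := ⟨(Icc (0:ℝ) T).restrict V, hVc.restrict⟩ with hv
    have hvfix : Function.IsFixedPt Φ v := by
      apply ContinuousMap.ext
      rintro ⟨t, ht⟩
      show Φf v t = V t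
      simp only [hΦfdef]
      rw [hJext_eq t ht]
      have hintcongr : (∫ s in (0:ℝ)..t, Kt t s (v (π s)))
          = ∫ s in (0:ℝ)..t, K t s (V s) := by
        apply intervalIntegral.integral_congr
        intro s hs
        rw [uIcc_of_le ht.1] at hs
        have hsm : s ∈ Icc (0:ℝ) T := ⟨hs.1, hs.2.trans ht.2⟩
        have hπs : π s = ⟨s, hsm⟩ := projIcc_of_mem hT0 hsm
        show Kt t s (v (π s)) = K t s (V s)
        rw [hKt_eq t s hs.1 hs.2 ht.2, hπs]
        rfl
      rw [hintcongr]
      exact (hVeq t ht).symm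
    have hvx : v = x := hC.fixedPoint_unique (hvfix.iterate n)
    intro t ht
    have hπt : π t = ⟨t, ht⟩ := projIcc_of_mem hT0 ht
    show x (π t) = V t
    rw [← hvx, hπt]
    rfl
end

section
/- Let E be a real Banach space, T > 0, M > 0. Let a : [0, T] → E be continuous, and let b, σ : {(t, s) : 0 ≤ s ≤ t ≤ T} → (E →L E) be continuous with ‖b(t, s)‖ ≤ M and ‖σ(t, s)‖ ≤ M for all 0 ≤ s ≤ t ≤ T, and let N : [0, T] → (E →L E) be continuous. Then there exists a unique continuous function U : [0, T] → E satisfying U(t) = a(t) + ∫₀ᵗ b(t, s)(U(s)) ds + ∫₀ᵗ σ(t, s)(N(s)(U(s))) ds for all t ∈ [0, T]. -/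
open Set MeasureTheory

theorem volterra_exists_unique {E : Type*} [NormedAddCommGroup E] [NormedSpace ℝ E]
    [CompleteSpace E] (T : ℝ) (hT : 0 < T) (a : ℝ → E) (ha : Continuous a)
    (K : ℝ → ℝ → E →L[ℝ] E) (hK : Continuous fun p : ℝ × ℝ => K p.1 p.2) :
    ∃! x : C(Icc (0:ℝ) T, E), ∀ t : Icc (0:ℝ) T,
      x t = a t + ∫ s in (0:ℝ)..(t:ℝ), K t s (IccExtend hT.le x s) := by
  have hne : Nonempty C(Icc (0:ℝ) T, E) := ⟨ContinuousMap.const _ 0⟩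
  obtain ⟨L₀, hL₀⟩ := (isCompact_Icc.prod isCompact_Icc).exists_bound_of_continuousOn
      (f := fun p : ℝ × ℝ => K p.1 p.2) hK.continuousOn
  set L : ℝ := max L₀ 0 with hLdef
  have hL : 0 ≤ L := le_max_right _ _
  have hKL : ∀ t s : ℝ, t ∈ Icc (0:ℝ) T → s ∈ Icc (0:ℝ) T → ‖K t s‖ ≤ L := fun t s ht hs =>
    (hL₀ (t, s) ⟨ht, hs⟩).trans (le_max_left _ _)
  have extcont : ∀ x : C(Icc (0:ℝ) T, E), Continuous (IccExtend hT.le x) := fun x =>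
    x.continuous.Icc_extend'
  set Φ : C(Icc (0:ℝ) T, E) → C(Icc (0:ℝ) T, E) := fun x =>
    ⟨fun t => a t + ∫ s in (0:ℝ)..(t:ℝ), K t s (IccExtend hT.le x s), by
      refine (ha.comp continuous_subtype_val).add ?_
      refine intervalIntegral.continuous_parametric_intervalIntegral_of_continuous
        (f := fun (t : Icc (0:ℝ) T) s => K (t:ℝ) s (IccExtend hT.le x s)) ?_ continuous_subtype_val
      exact (hK.comp (continuous_subtype_val.prodMap continuous_id)).clm_apply
        ((extcont x).comp continuous_snd)⟩ with hΦdef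
  have hΦapp : ∀ (x : C(Icc (0:ℝ) T, E)) (t : Icc (0:ℝ) T),
      Φ x t = a t + ∫ s in (0:ℝ)..(t:ℝ), K t s (IccExtend hT.le x s) := fun x t => rfl
  have Kc : ∀ (u : ℝ) (w : ℝ → E), Continuous w → Continuous fun s => K u s (w s) := by
    intro u w hw
    exact (hK.comp (continuous_const.prodMk continuous_id)).clm_apply hw
  have key : ∀ (n : ℕ) (x y : C(Icc (0:ℝ) T, E)) (t : Icc (0:ℝ) T),
      dist (Φ^[n] x t) (Φ^[n] y t) ≤ (L * t) ^ n / n.factorial * dist x y := by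
    intro n
    induction n with
    | zero => intro x y t; simpa using ContinuousMap.dist_apply_le_dist t
    | succ n ih =>
      intro x y t
      have h0t : (0:ℝ) ≤ t := t.2.1
      have htT : (t:ℝ) ≤ T := t.2.2
      set g := IccExtend hT.le (Φ^[n] x) with hg
      set h := IccExtend hT.le (Φ^[n] y) with hh
      have hgc : Continuous g := extcont _
      have hhc : Continuous h := extcont _
      rw [Function.iterate_succ_apply', Function.iterate_succ_apply']
      have hd : dist (Φ (Φ^[n] x) t) (Φ (Φ^[n] y) t)
          = ‖∫ s in (0:ℝ)..(t:ℝ), (K t s (g s) - K t s (h s))‖ := by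
        rw [hΦapp, hΦapp, dist_eq_norm,
          intervalIntegral.integral_sub ((Kc t g hgc).intervalIntegrable _ _)
            ((Kc t h hhc).intervalIntegrable _ _)]
        congr 1
        abel
      rw [hd]
      set C : ℝ := L ^ (n+1) / n.factorial * dist x y with hC
      have hC0 : 0 ≤ C := by positivity
      have hb : ∀ s ∈ Set.Ioc (0:ℝ) (t:ℝ), ‖K t s (g s) - K t s (h s)‖ ≤ C * s ^ n := by
        intro s hs
        have hsI : s ∈ Icc (0:ℝ) T := ⟨hs.1.le, hs.2.trans htT⟩
        have e1 : g s = (Φ^[n] x) ⟨s, hsI⟩ := IccExtend_of_mem _ _ hsI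
        have e2 : h s = (Φ^[n] y) ⟨s, hsI⟩ := IccExtend_of_mem _ _ hsI
        calc ‖K t s (g s) - K t s (h s)‖ = ‖K (t:ℝ) s (g s - h s)‖ := by rw [map_sub]
          _ ≤ ‖K (t:ℝ) s‖ * ‖g s - h s‖ := (K t s).le_opNorm _
          _ ≤ L * ((L * s) ^ n / n.factorial * dist x y) := by
              refine mul_le_mul (hKL _ _ t.2 hsI) ?_ (norm_nonneg _) hL
              rw [e1, e2, ← dist_eq_norm]
              exact ih x y ⟨s, hsI⟩
          _ = C * s ^ n := by rw [hC]; ring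
      have hInt : IntervalIntegrable (fun s => C * s ^ n) volume 0 (t:ℝ) :=
        (continuous_const.mul (continuous_pow n)).intervalIntegrable _ _
      have hbound := intervalIntegral.norm_integral_le_abs_of_norm_le
        (f := fun s => K (t:ℝ) s (g s) - K (t:ℝ) s (h s)) (μ := volume) (a := 0) (b := (t:ℝ))
        (g := fun s => C * s ^ n)
        (((ae_restrict_mem measurableSet_uIoc).mono fun s hs =>
          hb s (by rwa [Set.uIoc_of_le h0t] at hs))) hInt
      have hval : (∫ s in (0:ℝ)..(t:ℝ), C * s ^ n) = C * ((t:ℝ) ^ (n+1) / (n+1)) := by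
        rw [intervalIntegral.integral_const_mul, integral_pow]
        norm_num
      have hfin : C * ((t:ℝ) ^ (n+1) / (n+1))
          = (L * t) ^ (n+1) / (n+1).factorial * dist x y := by
        rw [hC, Nat.factorial_succ]
        have hnf : (0:ℝ) < n.factorial := by positivity
        push_cast
        field_simp
        ring
      calc ‖∫ s in (0:ℝ)..(t:ℝ), (K (t:ℝ) s (g s) - K (t:ℝ) s (h s))‖
          ≤ |∫ s in (0:ℝ)..(t:ℝ), C * s ^ n| := hbound
        _ = (L * t) ^ (n+1) / (n+1).factorial * dist x y := by
            rw [hval, hfin, abs_of_nonneg (by positivity)]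
  have keyd : ∀ (n : ℕ) (x y : C(Icc (0:ℝ) T, E)),
      dist (Φ^[n] x) (Φ^[n] y) ≤ (L * T) ^ n / n.factorial * dist x y := by
    intro n x y
    refine (ContinuousMap.dist_le (by positivity)).2 fun t => (key n x y t).trans ?_
    gcongr
    · exact mul_nonneg hL t.2.1
    · exact t.2.2
  obtain ⟨n, hn⟩ : ∃ n : ℕ, (L * T) ^ n / n.factorial < 1 :=
    ((FloorSemiring.tendsto_pow_div_factorial_atTop (L * T)).eventually
      (gt_mem_nhds one_pos)).exists
  have hcd : (0:ℝ) ≤ (L * T) ^ n / n.factorial := by positivity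
  set cc : NNReal := ⟨(L * T) ^ n / n.factorial, hcd⟩ with hccdef
  have hc : ContractingWith cc (Φ^[n]) := by
    constructor
    · rw [← NNReal.coe_lt_coe]; exact hn
    · exact LipschitzWith.of_dist_le_mul fun x y => keyd n x y
  set x₀ := hc.fixedPoint (Φ^[n]) with hx₀
  have hfix : Φ x₀ = x₀ := hc.isFixedPt_fixedPoint_iterate
  refine ⟨x₀, fun t => ?_, fun y hy => ?_⟩
  · conv_lhs => rw [← ContinuousMap.congr_fun hfix t]
    exact hΦapp x₀ t
  · have hyfix : Function.IsFixedPt Φ y := DFunLike.ext _ _ fun t => (hy t).symm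
    exact hc.fixedPoint_unique (hyfix.iterate n)

/-- Theorem 4.2 (abstract form): existence and uniqueness of a continuous solution to the
stochastic Volterra equation
`U(t) = a(t) + ∫₀ᵗ b(t,s)(U(s)) ds + ∫₀ᵗ σ(t,s)(N(s)(U(s))) ds` on `[0, T]`. -/
theorem stmt_6 {E : Type*} [NormedAddCommGroup E] [NormedSpace ℝ E] [CompleteSpace E]
    (T M : ℝ) (hT : 0 < T) (hM : 0 < M)
    (a : ℝ → E) (ha : ContinuousOn a (Icc 0 T))
    (b σ : ℝ → ℝ → E →L[ℝ] E)
    (hbcont : ContinuousOn (fun p : ℝ × ℝ => b p.1 p.2)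
      {p : ℝ × ℝ | 0 ≤ p.2 ∧ p.2 ≤ p.1 ∧ p.1 ≤ T})
    (hσcont : ContinuousOn (fun p : ℝ × ℝ => σ p.1 p.2)
      {p : ℝ × ℝ | 0 ≤ p.2 ∧ p.2 ≤ p.1 ∧ p.1 ≤ T})
    (hbbd : ∀ s t : ℝ, 0 ≤ s → s ≤ t → t ≤ T → ‖b t s‖ ≤ M)
    (hσbd : ∀ s t : ℝ, 0 ≤ s → s ≤ t → t ≤ T → ‖σ t s‖ ≤ M)
    (N : ℝ → E →L[ℝ] E) (hN : ContinuousOn N (Icc 0 T)) :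
    ∃ U : ℝ → E,
      (ContinuousOn U (Icc 0 T) ∧
        ∀ t ∈ Icc (0:ℝ) T,
          U t = a t + (∫ s in (0:ℝ)..t, b t s (U s)) + ∫ s in (0:ℝ)..t, σ t s (N s (U s))) ∧
      ∀ V : ℝ → E,
        (ContinuousOn V (Icc 0 T) ∧
          ∀ t ∈ Icc (0:ℝ) T,
            V t = a t + (∫ s in (0:ℝ)..t, b t s (V s)) + ∫ s in (0:ℝ)..t, σ t s (N s (V s))) →
        EqOn U V (Icc 0 T) := by
  classical
  -- the clamp to `[0, T]`
  set c : ℝ → ℝ := fun u => max 0 (min u T) with hcdef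
  have hc_cont : Continuous c := continuous_const.max (continuous_id.min continuous_const)
  have hc_mem : ∀ u, c u ∈ Icc (0:ℝ) T := fun u =>
    ⟨le_max_left _ _, max_le hT.le (min_le_right _ _)⟩
  have hc_id : ∀ u ∈ Icc (0:ℝ) T, c u = u := fun u hu => by
    simp only [hcdef]; rw [min_eq_left hu.2, max_eq_right hu.1]
  -- the extended kernel
  set K : ℝ → ℝ → E →L[ℝ] E := fun t s =>
    b (max (c t) (c s)) (c s) + (σ (max (c t) (c s)) (c s)).comp (N (c s)) with hKdef
  set S : Set (ℝ × ℝ) := {p : ℝ × ℝ | 0 ≤ p.2 ∧ p.2 ≤ p.1 ∧ p.1 ≤ T} with hSdef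
  have hm_cont : Continuous (fun p : ℝ × ℝ => (max (c p.1) (c p.2), c p.2)) :=
    ((hc_cont.comp continuous_fst).max (hc_cont.comp continuous_snd)).prodMk
      (hc_cont.comp continuous_snd)
  have hm_mem : ∀ p : ℝ × ℝ, (max (c p.1) (c p.2), c p.2) ∈ S := fun p =>
    ⟨(hc_mem p.2).1, le_max_right _ _, max_le (hc_mem p.1).2 (hc_mem p.2).2⟩
  have hb' : Continuous fun p : ℝ × ℝ => b (max (c p.1) (c p.2)) (c p.2) :=
    hbcont.comp_continuous hm_cont hm_mem
  have hσ' : Continuous fun p : ℝ × ℝ => σ (max (c p.1) (c p.2)) (c p.2) :=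
    hσcont.comp_continuous hm_cont hm_mem
  have hN' : Continuous fun p : ℝ × ℝ => N (c p.2) :=
    hN.comp_continuous (hc_cont.comp continuous_snd) fun p => hc_mem _
  have hKcont : Continuous fun p : ℝ × ℝ => K p.1 p.2 := hb'.add (hσ'.clm_comp hN')
  have hacont : Continuous fun u => a (c u) := ha.comp_continuous hc_cont hc_mem
  obtain ⟨x₀, hx₀, huniq⟩ := volterra_exists_unique T hT (fun u => a (c u)) hacont K hKcont
  -- the conversion lemma
  have conv : ∀ t ∈ Icc (0:ℝ) T, ∀ (w : ℝ → E), Continuous w →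
      (∫ s in (0:ℝ)..t, K t s (w s)) =
        (∫ s in (0:ℝ)..t, b t s (w s)) + ∫ s in (0:ℝ)..t, σ t s (N s (w s)) := by
    intro t ht w hw
    have hm1 : Continuous fun s : ℝ => (max (c t) (c s), c s) :=
      ((continuous_const.max hc_cont).prodMk hc_cont)
    have hm1m : ∀ s : ℝ, (max (c t) (c s), c s) ∈ S := fun s =>
      ⟨(hc_mem s).1, le_max_right _ _, max_le (hc_mem t).2 (hc_mem s).2⟩
    have hB1 : Continuous fun s : ℝ => b (max (c t) (c s)) (c s) :=
      hbcont.comp_continuous hm1 hm1m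
    have hS1 : Continuous fun s : ℝ => σ (max (c t) (c s)) (c s) :=
      hσcont.comp_continuous hm1 hm1m
    have hN1 : Continuous fun s : ℝ => N (c s) :=
      hN.comp_continuous hc_cont fun s => hc_mem _
    have hBc : Continuous fun s : ℝ => b (max (c t) (c s)) (c s) (w s) := hB1.clm_apply hw
    have hSc : Continuous fun s : ℝ => σ (max (c t) (c s)) (c s) (N (c s) (w s)) :=
      hS1.clm_apply (hN1.clm_apply hw)
    have split : (∫ s in (0:ℝ)..t, K t s (w s)) =
        (∫ s in (0:ℝ)..t, b (max (c t) (c s)) (c s) (w s)) +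
          ∫ s in (0:ℝ)..t, σ (max (c t) (c s)) (c s) (N (c s) (w s)) := by
      rw [← intervalIntegral.integral_add (hBc.intervalIntegrable _ _)
        (hSc.intervalIntegrable _ _)]
      rfl
    rw [split]
    congr 1
    · refine intervalIntegral.integral_congr fun s hs => ?_
      rw [Set.uIcc_of_le ht.1] at hs
      have hsI : s ∈ Icc (0:ℝ) T := ⟨hs.1, hs.2.trans ht.2⟩
      rw [hc_id t ht, hc_id s hsI, max_eq_left hs.2]
    · refine intervalIntegral.integral_congr fun s hs => ?_
      rw [Set.uIcc_of_le ht.1] at hs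
      have hsI : s ∈ Icc (0:ℝ) T := ⟨hs.1, hs.2.trans ht.2⟩
      rw [hc_id t ht, hc_id s hsI, max_eq_left hs.2]
  set U : ℝ → E := IccExtend hT.le x₀ with hUdef
  have hUcont : Continuous U := x₀.continuous.Icc_extend'
  have hUval : ∀ s, ∀ hs : s ∈ Icc (0:ℝ) T, U s = x₀ ⟨s, hs⟩ := fun s hs =>
    IccExtend_of_mem _ _ hs
  refine ⟨U, ⟨hUcont.continuousOn, fun t ht => ?_⟩, fun V hV => ?_⟩
  · have := hx₀ ⟨t, ht⟩
    rw [hUval t ht, this, hc_id t ht, conv t ht U hUcont, ← add_assoc]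
  · obtain ⟨hVc, hVeq⟩ := hV
    set y : C(Icc (0:ℝ) T, E) := ⟨fun t => V t, hVc.restrict⟩ with hydef
    have hw : Continuous (IccExtend hT.le y) := y.continuous.Icc_extend'
    have hwval : ∀ s ∈ Icc (0:ℝ) T, IccExtend hT.le y s = V s := fun s hs => by
      rw [IccExtend_of_mem _ _ hs]
      rfl
    have hy : ∀ t : Icc (0:ℝ) T,
        y t = a (c t) + ∫ s in (0:ℝ)..(t:ℝ), K t s (IccExtend hT.le y s) := by
      intro t
      rw [conv t t.2 _ hw, hc_id t t.2]
      have e1 : (∫ s in (0:ℝ)..(t:ℝ), b t s (IccExtend hT.le y s))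
          = ∫ s in (0:ℝ)..(t:ℝ), b t s (V s) := by
        refine intervalIntegral.integral_congr fun s hs => ?_
        rw [Set.uIcc_of_le t.2.1] at hs
        rw [hwval s ⟨hs.1, hs.2.trans t.2.2⟩]
      have e2 : (∫ s in (0:ℝ)..(t:ℝ), σ t s (N s (IccExtend hT.le y s)))
          = ∫ s in (0:ℝ)..(t:ℝ), σ t s (N s (V s)) := by
        refine intervalIntegral.integral_congr fun s hs => ?_
        rw [Set.uIcc_of_le t.2.1] at hs
        rw [hwval s ⟨hs.1, hs.2.trans t.2.2⟩]
      rw [e1, e2, ← add_assoc]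
      exact hVeq t t.2
    have : y = x₀ := huniq y hy
    intro t ht
    rw [hUval t ht, ← this]
    rfl
end

section
/- Let 0 < β < 1. Then the function v ↦ (1 − v)₊^{β−1} − (−v)₊^{β−1} (where x₊ = max(x, 0), and the convention 0^{β−1} is irrelevant up to a Lebesgue-null set) is integrable on ℝ with respect to Lebesgue measure. -/
open MeasureTheory Set

open Real

lemma key_ineq (β a : ℝ) (hβ0 : 0 < β) (hβ1 : β < 1) (ha : 1 ≤ a) :
    a ^ (β - 1) - (a + 1) ^ (β - 1) ≤ (1 - β) * a ^ (β - 2) := by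
  have ha0 : (0:ℝ) < a := lt_of_lt_of_le one_pos ha
  have h0 : (0:ℝ) ∉ uIcc a (a + 1) := by
    rw [Set.mem_uIcc]; push_neg
    constructor <;> intro h <;> linarith
  have hInt : IntervalIntegrable (fun x : ℝ => x ^ (β - 2)) volume a (a + 1) :=
    intervalIntegral.intervalIntegrable_rpow (Or.inr h0)
  have hval : ∫ x in a..(a+1), x ^ (β - 2)
      = ((a+1) ^ (β - 1) - a ^ (β - 1)) / (β - 1) := by
    rw [integral_rpow (Or.inr ⟨by intro h; linarith [sub_eq_zero.mp (by linarith : β - 2 - (-1) = 0)], h0⟩)]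
    have h2 : β - 2 + 1 = β - 1 := by ring
    rw [h2]
  have hbound : (∫ x in a..(a+1), x ^ (β - 2)) ≤ a ^ (β - 2) := by
    have : (∫ x in a..(a+1), x ^ (β - 2)) ≤ ∫ _x in a..(a+1), a ^ (β - 2) := by
      apply intervalIntegral.integral_mono_on (by linarith) hInt (intervalIntegrable_const)
      intro x hx
      exact Real.rpow_le_rpow_of_nonpos ha0 hx.1 (by linarith)
    simpa using this
  rw [hval] at hbound
  have h1 : a ^ (β - 1) - (a + 1) ^ (β - 1)
      = (1 - β) * (((a+1) ^ (β - 1) - a ^ (β - 1)) / (β - 1)) := by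
    have hne : β - 1 ≠ 0 := by intro h; linarith
    field_simp
    ring
  rw [h1]
  exact mul_le_mul_of_nonneg_left hbound (by linarith)

/-- For `0 < β < 1`, the function `v ↦ (1-v)₊^{β-1} - (-v)₊^{β-1}` is Lebesgue integrable
on `ℝ` (with the convention `0^{β-1} = 0`, which only matters on a null set). -/
theorem stmt_12 (β : ℝ) (hβ0 : 0 < β) (hβ1 : β < 1) :
    Integrable (fun v : ℝ => max (1 - v) 0 ^ (β - 1) - max (-v) 0 ^ (β - 1))
      (volume : Measure ℝ) := by
  have hb1 : β - 1 ≠ 0 := by intro h; linarith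
  have hmeas : Measurable (fun v : ℝ => max (1 - v) 0 ^ (β - 1) - max (-v) 0 ^ (β - 1)) := by
    exact (((measurable_const.sub measurable_id').max measurable_const).pow
      measurable_const).sub ((measurable_id'.neg.max measurable_const).pow measurable_const)
  rw [← integrableOn_univ, ← Iic_union_Ioi (a := (-1:ℝ)), integrableOn_union]
  constructor
  · -- tail on Iic (-1)
    have hM : IntegrableOn (fun v : ℝ => (1 - β) * (-v) ^ (β - 2)) (Iic (-1)) := by
      apply Integrable.const_mul
      have := (MeasurePreserving.integrableOn_comp_preimage
        (Measure.measurePreserving_neg (volume : Measure ℝ))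
        (Homeomorph.neg ℝ).measurableEmbedding
        (f := fun x : ℝ => x ^ (β - 2)) (s := Ici (1:ℝ))).2
      have hIci : IntegrableOn (fun x : ℝ => x ^ (β - 2)) (Ici 1) := by
        rw [integrableOn_Ici_iff_integrableOn_Ioi]
        exact (integrableOn_Ioi_rpow_iff one_pos).2 (by linarith)
      have h2 := this hIci
      simpa [Function.comp_def, neg_preimage, neg_Ici, IntegrableOn] using h2
    apply Integrable.mono' hM (hmeas.aestronglyMeasurable.restrict)
    filter_upwards [ae_restrict_mem measurableSet_Iic] with v hv
    have hv' : v ≤ -1 := hv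
    have h1 : max (1 - v) 0 = 1 - v := max_eq_left (by linarith)
    have h2 : max (-v) 0 = -v := max_eq_left (by linarith)
    rw [h1, h2, Real.norm_eq_abs]
    have ha : (1:ℝ) ≤ -v := by linarith
    have hkey := key_ineq β (-v) hβ0 hβ1 ha
    have hmono : (1 - v) ^ (β - 1) ≤ (-v) ^ (β - 1) :=
      Real.rpow_le_rpow_of_nonpos (by linarith) (by linarith) (by linarith)
    rw [abs_of_nonpos (by linarith)]
    have he : -v + 1 = 1 - v := by ring
    rw [he] at hkey
    linarith
  · -- Ioi (-1)
    have hsplit : Ioi (-1:ℝ) = Ioc (-1) 1 ∪ Ioi 1 := (Ioc_union_Ioi_eq_Ioi (by norm_num)).symm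
    rw [hsplit, integrableOn_union]
    constructor
    · apply Integrable.sub
      · -- (1-v)₊^(β-1) on Ioc (-1) 1
        have h1 : IntervalIntegrable (fun x : ℝ => x ^ (β - 1)) volume 0 2 :=
          intervalIntegral.intervalIntegrable_rpow' (by linarith)
        have h2 := (h1.comp_sub_left 1).symm
        norm_num at h2
        rw [intervalIntegrable_iff_integrableOn_Ioc_of_le (by norm_num)] at h2
        apply h2.congr_fun ?_ measurableSet_Ioc
        intro v hv
        beta_reduce
        rw [max_eq_left (by linarith [hv.2] : (0:ℝ) ≤ 1 - v)]
      · -- (-v)₊^(β-1) on Ioc (-1) 1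
        have hsplit2 : Ioc (-1:ℝ) 1 = Ioc (-1) 0 ∪ Ioc 0 1 :=
          (Ioc_union_Ioc_eq_Ioc (by norm_num) (by norm_num)).symm
        rw [hsplit2]
        apply IntegrableOn.union
        · have h1 : IntervalIntegrable (fun x : ℝ => x ^ (β - 1)) volume 0 1 :=
            intervalIntegral.intervalIntegrable_rpow' (by linarith)
          have h2 := (h1.comp_sub_left 0).symm
          norm_num at h2
          rw [intervalIntegrable_iff_integrableOn_Ioc_of_le (by norm_num)] at h2
          apply h2.congr_fun ?_ measurableSet_Ioc
          intro v hv
          beta_reduce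
          rw [max_eq_left (by linarith [hv.2] : (0:ℝ) ≤ -v)]
        · apply (integrableOn_zero (s := Ioc (0:ℝ) 1)).congr_fun ?_ measurableSet_Ioc
          intro v hv
          beta_reduce
          rw [max_eq_right (by linarith [hv.1] : -v ≤ (0:ℝ)), Real.zero_rpow hb1]
    · apply (integrableOn_zero (s := Ioi (1:ℝ))).congr_fun ?_ measurableSet_Ioi
      intro v hv
      have hv' : (1:ℝ) < v := hv
      beta_reduce
      rw [max_eq_right (by linarith : 1 - v ≤ (0:ℝ)),
        max_eq_right (by linarith : -v ≤ (0:ℝ)), Real.zero_rpow hb1, sub_self]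
end

section
/- Let 0 < β < 1 and C > 0, and set K_β = ∫_ℝ | (1 − v)₊^{β−1} − (−v)₊^{β−1} | dv (which is finite). Then for every measurable function ξ : ℝ → ℝ with |ξ(x)| ≤ C for all x ∈ ℝ, and for all real numbers s < t, one has | ∫_ℝ [ (t − u)₊^{β−1} − (s − u)₊^{β−1} ] ξ(u) du | ≤ C · K_β · (t − s)^β. -/
open MeasureTheory Set

private lemma stmt14_comp_neg {f : ℝ → ℝ} {c : ℝ}
    (hf : IntegrableOn f (Ioi c)) : IntegrableOn (fun x => f (-x)) (Iio (-c)) := by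
  have h_map : ((volume : Measure ℝ).restrict (Iio (-c))).map Neg.neg
      = (volume : Measure ℝ).restrict (Ioi c) := by
    conv => rhs; rw [← Measure.map_neg_eq_self (volume : Measure ℝ),
      measurableEmbedding_neg.restrict_map]
    congr 2
    ext x
    simp [lt_neg]
  rw [IntegrableOn, ← h_map, measurableEmbedding_neg.integrable_map_iff] at hf
  exact hf

private lemma stmt14_mvt {β : ℝ} (hβ1 : β < 1) {w : ℝ} (hw : 0 < w) :
    w ^ (β - 1) - (w + 1) ^ (β - 1) ≤ (1 - β) * w ^ (β - 2) := by
  obtain ⟨c, hc, hceq⟩ := exists_hasDerivAt_eq_slope (fun x : ℝ => x ^ (β - 1))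
    (fun x : ℝ => (β - 1) * x ^ (β - 1 - 1)) (by linarith : w < w + 1)
    (ContinuousOn.rpow_const continuousOn_id
      (fun x hx => Or.inl (ne_of_gt (lt_of_lt_of_le hw hx.1))))
    (fun x hx => Real.hasDerivAt_rpow_const (Or.inl (ne_of_gt (hw.trans hx.1))))
  have h1 : w + 1 - w = (1 : ℝ) := by ring
  rw [h1, div_one] at hceq
  have hexp : β - 1 - 1 = β - 2 := by ring
  rw [hexp] at hceq
  have h2 : w ^ (β - 1) - (w + 1) ^ (β - 1) = (1 - β) * c ^ (β - 2) := by linarith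
  rw [h2]
  have h3 : c ^ (β - 2) ≤ w ^ (β - 2) :=
    Real.rpow_le_rpow_of_nonpos hw hc.1.le (by linarith)
  exact mul_le_mul_of_nonneg_left h3 (by linarith)

/-- The Hölder-type estimate of exponent `β` from the proof of Theorem 4.2: with
`K_β = ∫ |(1-v)₊^{β-1} - (-v)₊^{β-1}| dv` (finite), for every measurable `ξ` bounded by `C`
and all `s < t`,
`|∫ [(t-u)₊^{β-1} - (s-u)₊^{β-1}] ξ(u) du| ≤ C · K_β · (t-s)^β`. -/
theorem stmt_14 (β C : ℝ) (hβ0 : 0 < β) (hβ1 : β < 1) (hC : 0 < C)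
    (Kβ : ℝ)
    (hKβ : Kβ = ∫ v : ℝ, |max (1 - v) 0 ^ (β - 1) - max (-v) 0 ^ (β - 1)|) :
    Integrable (fun v : ℝ => |max (1 - v) 0 ^ (β - 1) - max (-v) 0 ^ (β - 1)|)
      (volume : Measure ℝ) ∧
    ∀ ξ : ℝ → ℝ, Measurable ξ → (∀ x : ℝ, |ξ x| ≤ C) → ∀ s t : ℝ, s < t →
      |∫ u : ℝ, (max (t - u) 0 ^ (β - 1) - max (s - u) 0 ^ (β - 1)) * ξ u|
        ≤ C * Kβ * (t - s) ^ β := by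
  set g : ℝ → ℝ := fun v => max (1 - v) 0 ^ (β - 1) - max (-v) 0 ^ (β - 1) with hg_def
  have hb1 : β - 1 ≠ 0 := by linarith
  have hzero : (0 : ℝ) ^ (β - 1) = 0 := Real.zero_rpow hb1
  have measg : Measurable g :=
    (((measurable_const.sub measurable_id).max measurable_const).pow measurable_const).sub
      ((measurable_id.neg.max measurable_const).pow measurable_const)
  -- integrability of max x 0 ^ (β-1) on bounded intervals
  have hmax : ∀ a b : ℝ, IntervalIntegrable (fun x : ℝ => max x 0 ^ (β - 1)) volume a b := by
    intro a b
    refine IntervalIntegrable.mono_fun'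
      ((intervalIntegral.intervalIntegrable_rpow' (by linarith : (-1:ℝ) < β - 1)).norm)
      ((measurable_id.max measurable_const).pow measurable_const).aestronglyMeasurable ?_
    refine ae_of_all _ fun x => ?_
    dsimp only
    rcases le_total x 0 with hx | hx
    · rw [max_eq_right hx, hzero]
      simp [norm_nonneg]
    · rw [max_eq_left hx]
  -- integrability of g on [-1, 1]
  have h_mid : IntegrableOn g (Icc (-1 : ℝ) 1) := by
    have c1 : IntervalIntegrable (fun v : ℝ => max (1 - v) 0 ^ (β - 1)) volume (-1) 1 := by
      have := (hmax 0 2).comp_sub_left 1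
      norm_num at this
      exact this.symm
    have c2 : IntervalIntegrable (fun v : ℝ => max (-v) 0 ^ (β - 1)) volume (-1) 1 := by
      have := (IntervalIntegrable.iff_comp_neg).mp (hmax (-1) 1)
      norm_num at this
      exact this.symm
    have := (c1.sub c2)
    rw [intervalIntegrable_iff_integrableOn_Ioc_of_le (by norm_num : (-1:ℝ) ≤ 1)] at this
    rw [integrableOn_Icc_iff_integrableOn_Ioc]
    exact this
  -- integrability of g on (-∞, -1)
  have h_neg : IntegrableOn g (Iio (-1 : ℝ)) := by
    have maj : IntegrableOn (fun v : ℝ => (1 - β) * (-v) ^ (β - 2)) (Iio (-1 : ℝ)) := by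
      have h0 : IntegrableOn (fun t : ℝ => (1 - β) * t ^ (β - 2)) (Ioi (1 : ℝ)) :=
        (integrableOn_Ioi_rpow_of_lt (by linarith : β - 2 < -1) one_pos).const_mul (1 - β)
      have := stmt14_comp_neg h0
      norm_num at this
      exact this
    refine Integrable.mono' maj (measg.aestronglyMeasurable.restrict) ?_
    refine (ae_restrict_iff' measurableSet_Iio).2 (ae_of_all _ fun v hv => ?_)
    have hv1 : v < -1 := hv
    have hw : (0 : ℝ) < -v := by linarith
    have h1v : (0 : ℝ) ≤ 1 - v := by linarith
    have hgv : g v = (1 - v) ^ (β - 1) - (-v) ^ (β - 1) := by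
      simp only [hg_def]
      rw [max_eq_left h1v, max_eq_left hw.le]
    have hle : (1 - v) ^ (β - 1) ≤ (-v) ^ (β - 1) :=
      Real.rpow_le_rpow_of_nonpos hw (by linarith) (by linarith)
    have h1v' : (1 - v : ℝ) = -v + 1 := by ring
    rw [Real.norm_eq_abs, hgv, abs_of_nonpos (by linarith)]
    have := stmt14_mvt hβ1 hw
    calc -((1 - v) ^ (β - 1) - (-v) ^ (β - 1))
        = (-v) ^ (β - 1) - (-v + 1) ^ (β - 1) := by rw [h1v']; ring
      _ ≤ (1 - β) * (-v) ^ (β - 2) := this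
  -- integrability of g on [1, ∞)
  have h_pos : IntegrableOn g (Ici (1 : ℝ)) := by
    refine (integrableOn_zero (μ := volume)).congr_fun ?_ measurableSet_Ici
    intro v hv
    have h1 : max (1 - v) 0 = 0 := max_eq_right (by simp at hv; linarith)
    have h2 : max (-v) 0 = 0 := max_eq_right (by simp at hv; linarith)
    simp [hg_def, h1, h2, hzero]
  have hg : Integrable g := by
    rw [← integrableOn_univ]
    refine ((h_neg.union h_mid).union h_pos).mono_set fun x _ => ?_
    rcases lt_or_ge x (-1 : ℝ) with h | h
    · exact Or.inl (Or.inl h)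
    · rcases le_total x 1 with h' | h'
      · exact Or.inl (Or.inr ⟨h, h'⟩)
      · exact Or.inr h'
  refine ⟨hg.abs, ?_⟩
  intro ξ hξm hξb s t hst
  set a : ℝ := t - s with ha_def
  have ha : 0 < a := by simp [ha_def]; linarith
  have hKnn : 0 ≤ Kβ := by
    rw [hKβ]; exact integral_nonneg fun v => abs_nonneg _
  -- pointwise factorization
  have key : ∀ u : ℝ, max (t - u) 0 ^ (β - 1) - max (s - u) 0 ^ (β - 1)
      = a ^ (β - 1) * g ((u - s) / a) := by
    intro u
    have hscale : ∀ x : ℝ, max x 0 ^ (β - 1) = a ^ (β - 1) * max (x / a) 0 ^ (β - 1) := by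
      intro x
      have h1 : max x 0 = a * max (x / a) 0 := by
        rw [mul_max_of_nonneg _ _ ha.le, mul_div_cancel₀ _ ha.ne', mul_zero]
      rw [h1, Real.mul_rpow ha.le (le_max_right _ _)]
    have e1 : (t - u) / a = 1 - (u - s) / a := by
      field_simp
      ring
    have e2 : (s - u) / a = -((u - s) / a) := by
      field_simp
      ring
    rw [hscale (t - u), hscale (s - u), e1, e2, hg_def]
    ring
  simp_rw [key, mul_assoc, integral_const_mul]
  -- change of variables
  set F : ℝ → ℝ := fun v => ξ (s + a * v) * g v with hF_def
  have hJ : ∫ u : ℝ, g ((u - s) / a) * ξ u = a * ∫ v, F v := by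
    have e3 : ∀ u : ℝ, g ((u - s) / a) * ξ u = (fun x => F (a⁻¹ * x)) (u - s) := by
      intro u
      simp only [hF_def]
      rw [mul_comm]
      congr 2
      · field_simp
        ring
      · rw [div_eq_inv_mul]
    simp_rw [e3]
    rw [integral_sub_right_eq_self (fun x => F (a⁻¹ * x)) s,
      MeasureTheory.Measure.integral_comp_inv_mul_left F a]
    simp [abs_of_pos ha]
  rw [hJ]
  -- bound the integral of F
  have hFint : Integrable F := by
    refine hg.bdd_mul (c := C) ?_ (ae_of_all _ fun x => ?_)
    · exact (hξm.comp (measurable_const.add (measurable_const.mul measurable_id))).aestronglyMeasurable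
    · simpa [Real.norm_eq_abs] using hξb (s + a * x)
  have hFbound : |∫ v, F v| ≤ C * Kβ := by
    calc |∫ v, F v| ≤ ∫ v, |F v| := by
          simpa [Real.norm_eq_abs] using norm_integral_le_integral_norm (μ := volume) F
      _ ≤ ∫ v, C * |g v| := by
          refine integral_mono hFint.abs (hg.abs.const_mul C) fun v => ?_
          simp only [hF_def, abs_mul]
          exact mul_le_mul_of_nonneg_right (hξb _) (abs_nonneg _)
      _ = C * Kβ := by rw [integral_const_mul, hKβ]
  have hab : a ^ (β - 1) * a = a ^ β := by
    nth_rewrite 2 [← Real.rpow_one a]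
    rw [← Real.rpow_add ha]; norm_num
  have hapow : |a ^ (β - 1) * (a * ∫ v, F v)| = a ^ β * |∫ v, F v| := by
    rw [abs_mul, abs_mul, abs_of_pos (Real.rpow_pos_of_pos ha _), abs_of_pos ha, ← mul_assoc, hab]
  rw [hapow]
  calc a ^ β * |∫ v, F v| ≤ a ^ β * (C * Kβ) :=
        mul_le_mul_of_nonneg_left hFbound (Real.rpow_nonneg ha.le _)
    _ = C * (Kβ * a ^ β) := by ring
end

section
/- Let 0 < β < 1/2, p > 1 and C > 0, and let (ξ_n)_{n≥1} be a sequence of measurable functions ξ_n : ℝ → ℝ with |ξ_n(x)| ≤ C for all n ≥ 1 and x ∈ ℝ. Then there exists a constant C′ > 0 such that for all real numbers s < t, Σ_{n=1}^∞ (n + 1)^{−2p} ( ∫_ℝ [ (t − u)₊^{β−1} − (s − u)₊^{β−1} ] ξ_n(u) du )² ≤ C′ (t − s)^{2β}. -/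
open MeasureTheory Set
open scoped ENNReal

private lemma real_rpow_subadd {x y q : ℝ} (hx : 0 ≤ x) (hy : 0 ≤ y) (hq : 0 ≤ q)
    (hq1 : q ≤ 1) : (x + y) ^ q ≤ x ^ q + y ^ q := by
  have h := NNReal.rpow_add_le_add_rpow x.toNNReal y.toNNReal hq hq1
  rw [← NNReal.coe_le_coe] at h
  rw [← Real.toNNReal_add hx hy] at h
  simpa [NNReal.coe_rpow, Real.coe_toNNReal x hx, Real.coe_toNNReal y hy,
    Real.coe_toNNReal (x + y) (by linarith)] using h

private lemma kernel_pointwise {β δ v : ℝ} (hβ0 : 0 < β) (hβ : β < 1 / 2) (hδ : 0 < δ)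
    (hv : δ < v) :
    v ^ (β - 1) - (v + δ) ^ (β - 1) ≤ δ ^ (1 - β) * v ^ (2 * β - 2) := by
  have hv0 : 0 < v := hδ.trans hv
  have hb0 : 0 < v + δ := by linarith
  have hA : 0 < v ^ (1 - β) := Real.rpow_pos_of_pos hv0 _
  have hB : 0 < (v + δ) ^ (1 - β) := Real.rpow_pos_of_pos hb0 _
  have hinv : ∀ x : ℝ, 0 < x → x ^ (β - 1) = (x ^ (1 - β))⁻¹ := by
    intro x hx
    rw [← Real.rpow_neg hx.le, neg_sub]
  have key : v ^ (β - 1) - (v + δ) ^ (β - 1)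
      = ((v + δ) ^ (1 - β) - v ^ (1 - β)) * (v ^ (β - 1) * (v + δ) ^ (β - 1)) := by
    rw [hinv v hv0, hinv (v + δ) hb0]
    field_simp
  have h2 : (v + δ) ^ (1 - β) - v ^ (1 - β) ≤ δ ^ (1 - β) := by
    have := real_rpow_subadd (q := 1 - β) hv0.le hδ.le (by linarith) (by linarith)
    linarith
  have h3 : (v + δ) ^ (β - 1) ≤ v ^ (β - 1) :=
    Real.rpow_le_rpow_of_nonpos hv0 (by linarith) (by linarith)
  have hvb : 0 ≤ v ^ (β - 1) := Real.rpow_nonneg hv0.le _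
  have hbb : 0 ≤ (v + δ) ^ (β - 1) := Real.rpow_nonneg hb0.le _
  calc v ^ (β - 1) - (v + δ) ^ (β - 1)
      = ((v + δ) ^ (1 - β) - v ^ (1 - β)) * (v ^ (β - 1) * (v + δ) ^ (β - 1)) := key
    _ ≤ δ ^ (1 - β) * (v ^ (β - 1) * v ^ (β - 1)) := by
        apply mul_le_mul h2 (mul_le_mul_of_nonneg_left h3 hvb) (by positivity)
          (Real.rpow_nonneg hδ.le _)
    _ = δ ^ (1 - β) * v ^ (2 * β - 2) := by
        rw [← Real.rpow_add hv0]
        have : β - 1 + (β - 1) = 2 * β - 2 := by ring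
        rw [this]

private lemma kernel_lintegral_shifted {β δ : ℝ} (hβ0 : 0 < β) (hβ : β < 1 / 2) (hδ : 0 < δ) :
    ∫⁻ v : ℝ, ENNReal.ofReal |max (v + δ) 0 ^ (β - 1) - max v 0 ^ (β - 1)|
      ≤ ENNReal.ofReal ((2 / β + 1 / (1 - 2 * β)) * δ ^ β) := by
  have hβ1 : β - 1 ≠ 0 := by intro h; linarith [h]
  have h2β : 0 < 1 - 2 * β := by linarith
  set F : ℝ → ℝ≥0∞ :=
    fun v => ENNReal.ofReal |max (v + δ) 0 ^ (β - 1) - max v 0 ^ (β - 1)| with hF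
  -- value of the basic integral on (0, δ]
  have hint1 : IntegrableOn (fun w : ℝ => w ^ (β - 1)) (Ioc 0 δ) volume :=
    (intervalIntegral.intervalIntegrable_rpow' (by linarith)).1
  have hval1 : ∫ w in Ioc 0 δ, w ^ (β - 1) = δ ^ β / β := by
    rw [← intervalIntegral.integral_of_le hδ.le, integral_rpow (Or.inl (by linarith))]
    have h1 : β - 1 + 1 = β := by ring
    rw [h1, Real.zero_rpow hβ0.ne']
    ring
  have hJ1 : ∫⁻ w in Ioc 0 δ, ENNReal.ofReal (w ^ (β - 1)) = ENNReal.ofReal (δ ^ β / β) := by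
    rw [← ofReal_integral_eq_lintegral_ofReal hint1 ?_, hval1]
    filter_upwards [ae_restrict_mem measurableSet_Ioc] with w hw
    exact Real.rpow_nonneg hw.1.le _
  -- Piece A : Iic 0
  have hA : ∫⁻ v in Iic (0 : ℝ), F v ≤ ENNReal.ofReal (δ ^ β / β) := by
    have h1 : ∫⁻ v in Iic (0 : ℝ), F v
        = ∫⁻ v in Iic (0 : ℝ), ENNReal.ofReal (max (v + δ) 0 ^ (β - 1)) := by
      refine setLIntegral_congr_fun measurableSet_Iic (fun v hv => ?_)
      simp only [hF]
      have h2 : max v 0 = 0 := max_eq_right hv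
      rw [h2, Real.zero_rpow hβ1, sub_zero,
        abs_of_nonneg (Real.rpow_nonneg (le_max_right _ _) _)]
    have hmap : ∫⁻ v in Iic (0 : ℝ), ENNReal.ofReal (max (v + δ) 0 ^ (β - 1))
        = ∫⁻ w in Iic δ, ENNReal.ofReal (max w 0 ^ (β - 1)) := by
      have hpre : (fun v : ℝ => v + δ) ⁻¹' (Iic δ) = Iic 0 := by
        ext v; simp
      rw [← hpre]
      exact (measurePreserving_add_right volume δ).setLIntegral_comp_preimage_emb
        (measurableEmbedding_addRight δ) (fun w => ENNReal.ofReal (max w 0 ^ (β - 1))) (Iic δ)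
    have hz : ∫⁻ w in Iic (0 : ℝ), ENNReal.ofReal (max w 0 ^ (β - 1)) = 0 := by
      have h0 : ∫⁻ w in Iic (0 : ℝ), ENNReal.ofReal (max w 0 ^ (β - 1))
          = ∫⁻ w in Iic (0 : ℝ), 0 := by
        refine setLIntegral_congr_fun measurableSet_Iic (fun w hw => ?_)
        rw [max_eq_right hw, Real.zero_rpow hβ1]
        simp
      rw [h0, lintegral_zero]
    have hcg : ∫⁻ w in Ioc (0 : ℝ) δ, ENNReal.ofReal (max w 0 ^ (β - 1))
        = ∫⁻ w in Ioc (0 : ℝ) δ, ENNReal.ofReal (w ^ (β - 1)) := by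
      refine setLIntegral_congr_fun measurableSet_Ioc (fun w hw => ?_)
      rw [max_eq_left hw.1.le]
    calc ∫⁻ v in Iic (0 : ℝ), F v
        = ∫⁻ w in Iic δ, ENNReal.ofReal (max w 0 ^ (β - 1)) := by rw [h1, hmap]
      _ = ∫⁻ w in Iic (0 : ℝ) ∪ Ioc 0 δ, ENNReal.ofReal (max w 0 ^ (β - 1)) := by
          rw [Iic_union_Ioc_eq_Iic hδ.le]
      _ ≤ (∫⁻ w in Iic (0 : ℝ), ENNReal.ofReal (max w 0 ^ (β - 1)))
            + ∫⁻ w in Ioc (0 : ℝ) δ, ENNReal.ofReal (max w 0 ^ (β - 1)) :=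
          lintegral_union_le _ _ _
      _ = ENNReal.ofReal (δ ^ β / β) := by rw [hz, zero_add, hcg, hJ1]
  -- Piece B : Ioc 0 δ
  have hB : ∫⁻ v in Ioc (0 : ℝ) δ, F v ≤ ENNReal.ofReal (δ ^ β / β) := by
    refine le_trans (lintegral_mono_ae ((ae_restrict_iff' measurableSet_Ioc).2
      (ae_of_all _ fun v hv => ?_))) hJ1.le
    have hv0 : (0 : ℝ) < v := hv.1
    simp only [hF]
    have h1 : max (v + δ) 0 = v + δ := max_eq_left (by linarith)
    have h2 : max v 0 = v := max_eq_left hv0.le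
    rw [h1, h2]
    apply ENNReal.ofReal_le_ofReal
    rw [abs_sub_comm, abs_of_nonneg (sub_nonneg.2
      (Real.rpow_le_rpow_of_nonpos hv0 (by linarith) (by linarith)))]
    have h3 : 0 ≤ (v + δ) ^ (β - 1) := Real.rpow_nonneg (by linarith) _
    linarith
  -- Piece C : Ioi δ
  have hintC : IntegrableOn (fun v : ℝ => δ ^ (1 - β) * v ^ (2 * β - 2)) (Ioi δ) volume :=
    (integrableOn_Ioi_rpow_of_lt (by linarith) hδ).const_mul _
  have hvalC : ∫ v in Ioi δ, δ ^ (1 - β) * v ^ (2 * β - 2) = δ ^ β / (1 - 2 * β) := by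
    rw [integral_const_mul, integral_Ioi_rpow_of_lt (by linarith) hδ]
    have h1 : 2 * β - 2 + 1 = 2 * β - 1 := by ring
    rw [h1]
    have h3 : δ ^ (1 - β) * δ ^ (2 * β - 1) = δ ^ β := by
      rw [← Real.rpow_add hδ]
      have : 1 - β + (2 * β - 1) = β := by ring
      rw [this]
    have hne1 : 2 * β - 1 ≠ 0 := by intro h; linarith
    have hne2 : 1 - 2 * β ≠ 0 := by intro h; linarith
    rw [show δ ^ (1 - β) * (-δ ^ (2 * β - 1) / (2 * β - 1))
        = -(δ ^ (1 - β) * δ ^ (2 * β - 1)) / (2 * β - 1) from by ring, h3]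
    field_simp
    ring
  have hC : ∫⁻ v in Ioi δ, F v ≤ ENNReal.ofReal (δ ^ β / (1 - 2 * β)) := by
    have hle : ∫⁻ v in Ioi δ, F v
        ≤ ∫⁻ v in Ioi δ, ENNReal.ofReal (δ ^ (1 - β) * v ^ (2 * β - 2)) := by
      refine lintegral_mono_ae ((ae_restrict_iff' measurableSet_Ioi).2
        (ae_of_all _ fun v hv => ?_))
      have hv0 : (0 : ℝ) < v := hδ.trans hv
      simp only [hF]
      have h1 : max (v + δ) 0 = v + δ := max_eq_left (by linarith)
      have h2 : max v 0 = v := max_eq_left hv0.le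
      rw [h1, h2]
      apply ENNReal.ofReal_le_ofReal
      rw [abs_sub_comm, abs_of_nonneg (sub_nonneg.2
        (Real.rpow_le_rpow_of_nonpos hv0 (by linarith) (by linarith)))]
      exact kernel_pointwise hβ0 hβ hδ hv
    refine hle.trans (le_of_eq ?_)
    rw [← ofReal_integral_eq_lintegral_ofReal hintC ?_, hvalC]
    filter_upwards [ae_restrict_mem measurableSet_Ioi] with v hv
    have hv0 : (0 : ℝ) < v := hδ.trans hv
    positivity
  -- combine
  have hsplit : (univ : Set ℝ) = Iic (0 : ℝ) ∪ (Ioc 0 δ ∪ Ioi δ) := by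
    rw [Ioc_union_Ioi_eq_Ioi hδ.le, Iic_union_Ioi]
  calc ∫⁻ v : ℝ, F v = ∫⁻ v in Iic (0 : ℝ) ∪ (Ioc 0 δ ∪ Ioi δ), F v := by
        rw [← hsplit, Measure.restrict_univ]
    _ ≤ (∫⁻ v in Iic (0 : ℝ), F v) + ((∫⁻ v in Ioc (0 : ℝ) δ, F v) + ∫⁻ v in Ioi δ, F v) := by
        refine le_trans (lintegral_union_le _ _ _) ?_
        gcongr
        exact lintegral_union_le _ _ _
    _ ≤ ENNReal.ofReal (δ ^ β / β)
          + (ENNReal.ofReal (δ ^ β / β) + ENNReal.ofReal (δ ^ β / (1 - 2 * β))) := by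
        gcongr
    _ = ENNReal.ofReal ((2 / β + 1 / (1 - 2 * β)) * δ ^ β) := by
        rw [← ENNReal.ofReal_add (by positivity) (by positivity),
          ← ENNReal.ofReal_add (by positivity) (by positivity)]
        congr 1
        field_simp
        ring

private lemma kernel_lintegral_le {β : ℝ} (hβ0 : 0 < β) (hβ : β < 1 / 2) {s t : ℝ}
    (hst : s < t) :
    ∫⁻ u : ℝ, ENNReal.ofReal |max (t - u) 0 ^ (β - 1) - max (s - u) 0 ^ (β - 1)|
      ≤ ENNReal.ofReal ((2 / β + 1 / (1 - 2 * β)) * (t - s) ^ β) := by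
  have hδ : 0 < t - s := sub_pos.2 hst
  have hemb : MeasurableEmbedding (fun u : ℝ => s - u) := by
    have h : (fun u : ℝ => s - u) = (fun x : ℝ => s + x) ∘ (fun u : ℝ => -u) := by
      funext u; simp [sub_eq_add_neg]
    rw [h]
    exact (measurableEmbedding_addLeft s).comp (MeasurableEquiv.neg ℝ).measurableEmbedding
  have hmp : MeasurePreserving (fun u : ℝ => s - u) volume volume :=
    Measure.measurePreserving_sub_left volume s
  have hcomp : ∀ u : ℝ,
      ENNReal.ofReal |max (t - u) 0 ^ (β - 1) - max (s - u) 0 ^ (β - 1)|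
      = ENNReal.ofReal |max ((s - u) + (t - s)) 0 ^ (β - 1) - max (s - u) 0 ^ (β - 1)| := by
    intro u
    have h : t - u = (s - u) + (t - s) := by ring
    rw [← h]
  calc ∫⁻ u : ℝ, ENNReal.ofReal |max (t - u) 0 ^ (β - 1) - max (s - u) 0 ^ (β - 1)|
      = ∫⁻ u : ℝ, ENNReal.ofReal
          |max ((s - u) + (t - s)) 0 ^ (β - 1) - max (s - u) 0 ^ (β - 1)| := by
        exact lintegral_congr hcomp
    _ = ∫⁻ v : ℝ, ENNReal.ofReal |max (v + (t - s)) 0 ^ (β - 1) - max v 0 ^ (β - 1)| :=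
        hmp.lintegral_comp_emb hemb
          (fun v => ENNReal.ofReal |max (v + (t - s)) 0 ^ (β - 1) - max v 0 ^ (β - 1)|)
    _ ≤ ENNReal.ofReal ((2 / β + 1 / (1 - 2 * β)) * (t - s) ^ β) :=
        kernel_lintegral_shifted hβ0 hβ hδ

/-- The weighted series estimate from the proof of Theorem 4.2: for `0 < β < 1/2`, `p > 1`
and a sequence `(ξ_n)_{n ≥ 1}` of measurable functions uniformly bounded by `C`, there is a
constant `C' > 0` such that for all `s < t`,
`Σ_{n=1}^∞ (n+1)^{-2p} (∫ [(t-u)₊^{β-1} - (s-u)₊^{β-1}] ξ_n(u) du)² ≤ C' (t-s)^{2β}`.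
(The sum over `n ≥ 1` is written as a `tsum` over `ℕ` via `n ↦ n + 1`.) -/
theorem stmt_15 (β p C : ℝ) (hβ0 : 0 < β) (hβ : β < 1 / 2) (hp : 1 < p) (hC : 0 < C)
    (ξ : ℕ → ℝ → ℝ)
    (hmeas : ∀ n : ℕ, 1 ≤ n → Measurable (ξ n))
    (hbd : ∀ n : ℕ, 1 ≤ n → ∀ x : ℝ, |ξ n x| ≤ C) :
    ∃ C' : ℝ, 0 < C' ∧ ∀ s t : ℝ, s < t →
      (∑' n : ℕ, ((n : ℝ) + 2) ^ (-(2 * p)) *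
          (∫ u : ℝ, (max (t - u) 0 ^ (β - 1) - max (s - u) 0 ^ (β - 1)) * ξ (n + 1) u) ^ 2)
        ≤ C' * (t - s) ^ (2 * β) := by
  have h2β : 0 < 1 - 2 * β := by linarith
  set K : ℝ := 2 / β + 1 / (1 - 2 * β) with hK
  have hKpos : 0 < K := add_pos (div_pos two_pos hβ0) (div_pos one_pos h2β)
  have hsum : Summable (fun n : ℕ => ((n : ℝ) + 2) ^ (-(2 * p))) := by
    have h1 : Summable (fun n : ℕ => ((n : ℝ)) ^ (-(2 * p))) :=
      Real.summable_nat_rpow.mpr (by linarith)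
    have h2 := (summable_nat_add_iff 2).mpr h1
    refine h2.congr fun n => ?_
    push_cast
    ring_nf
  have hApos : 0 < ∑' n : ℕ, ((n : ℝ) + 2) ^ (-(2 * p)) :=
    Summable.tsum_pos hsum (fun n => Real.rpow_nonneg (by positivity) _) 0
      (Real.rpow_pos_of_pos (by norm_num) _)
  refine ⟨(∑' n : ℕ, ((n : ℝ) + 2) ^ (-(2 * p))) * (C * K) ^ 2, by positivity, ?_⟩
  intro s t hst
  have hδ : 0 < t - s := sub_pos.2 hst
  have hI : ∀ n : ℕ,
      (∫ u : ℝ, (max (t - u) 0 ^ (β - 1) - max (s - u) 0 ^ (β - 1)) * ξ (n + 1) u) ^ 2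
        ≤ (C * K) ^ 2 * (t - s) ^ (2 * β) := by
    intro n
    set I := ∫ u : ℝ, (max (t - u) 0 ^ (β - 1) - max (s - u) 0 ^ (β - 1)) * ξ (n + 1) u with hIdef
    have hbound : |I| ≤ C * (K * (t - s) ^ β) := by
      have h1 := norm_integral_le_lintegral_norm (μ := (volume : Measure ℝ))
        (fun u => (max (t - u) 0 ^ (β - 1) - max (s - u) 0 ^ (β - 1)) * ξ (n + 1) u)
      rw [← hIdef, Real.norm_eq_abs] at h1
      refine le_trans h1 (ENNReal.toReal_le_of_le_ofReal (by positivity) ?_)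
      calc ∫⁻ u : ℝ, ENNReal.ofReal
              ‖(max (t - u) 0 ^ (β - 1) - max (s - u) 0 ^ (β - 1)) * ξ (n + 1) u‖
          ≤ ∫⁻ u : ℝ, ENNReal.ofReal C
              * ENNReal.ofReal |max (t - u) 0 ^ (β - 1) - max (s - u) 0 ^ (β - 1)| := by
            refine lintegral_mono fun u => ?_
            rw [← ENNReal.ofReal_mul hC.le]
            apply ENNReal.ofReal_le_ofReal
            rw [Real.norm_eq_abs, abs_mul, mul_comm]
            exact mul_le_mul (hbd (n + 1) (by omega) u) le_rfl (abs_nonneg _) hC.le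
        _ = ENNReal.ofReal C
              * ∫⁻ u : ℝ, ENNReal.ofReal |max (t - u) 0 ^ (β - 1) - max (s - u) 0 ^ (β - 1)| :=
            lintegral_const_mul' _ _ ENNReal.ofReal_ne_top
        _ ≤ ENNReal.ofReal C * ENNReal.ofReal (K * (t - s) ^ β) := by
            gcongr
            exact kernel_lintegral_le hβ0 hβ hst
        _ = ENNReal.ofReal (C * (K * (t - s) ^ β)) := (ENNReal.ofReal_mul hC.le).symm
    have hsq : I ^ 2 ≤ (C * (K * (t - s) ^ β)) ^ 2 := by
      rw [← sq_abs I]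
      exact pow_le_pow_left₀ (abs_nonneg I) hbound 2
    refine hsq.trans (le_of_eq ?_)
    have hrw : ((t - s) ^ β) ^ 2 = (t - s) ^ (2 * β) := by
      rw [sq, ← Real.rpow_add hδ]
      congr 1
      ring
    calc (C * (K * (t - s) ^ β)) ^ 2 = (C * K) ^ 2 * ((t - s) ^ β) ^ 2 := by ring
      _ = (C * K) ^ 2 * (t - s) ^ (2 * β) := by rw [hrw]
  have hb : Summable (fun n : ℕ =>
      ((n : ℝ) + 2) ^ (-(2 * p)) * ((C * K) ^ 2 * (t - s) ^ (2 * β))) := hsum.mul_right _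
  have hle : ∀ n : ℕ, ((n : ℝ) + 2) ^ (-(2 * p)) *
      (∫ u : ℝ, (max (t - u) 0 ^ (β - 1) - max (s - u) 0 ^ (β - 1)) * ξ (n + 1) u) ^ 2
      ≤ ((n : ℝ) + 2) ^ (-(2 * p)) * ((C * K) ^ 2 * (t - s) ^ (2 * β)) :=
    fun n => mul_le_mul_of_nonneg_left (hI n) (Real.rpow_nonneg (by positivity) _)
  have ha : Summable (fun n : ℕ => ((n : ℝ) + 2) ^ (-(2 * p)) *
      (∫ u : ℝ, (max (t - u) 0 ^ (β - 1) - max (s - u) 0 ^ (β - 1)) * ξ (n + 1) u) ^ 2) :=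
    Summable.of_nonneg_of_le
      (fun n => mul_nonneg (Real.rpow_nonneg (by positivity) _) (sq_nonneg _)) hle hb
  calc (∑' n : ℕ, ((n : ℝ) + 2) ^ (-(2 * p)) *
          (∫ u : ℝ, (max (t - u) 0 ^ (β - 1) - max (s - u) 0 ^ (β - 1)) * ξ (n + 1) u) ^ 2)
      ≤ ∑' n : ℕ, ((n : ℝ) + 2) ^ (-(2 * p)) * ((C * K) ^ 2 * (t - s) ^ (2 * β)) :=
        ha.tsum_le_tsum hle hb
    _ = (∑' n : ℕ, ((n : ℝ) + 2) ^ (-(2 * p))) * ((C * K) ^ 2 * (t - s) ^ (2 * β)) :=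
        tsum_mul_right
    _ = (∑' n : ℕ, ((n : ℝ) + 2) ^ (-(2 * p))) * (C * K) ^ 2 * (t - s) ^ (2 * β) := by ring
end
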